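/- (Sounderson parametrization) Let u,v,w be positive integers with u²+v²=w². Then a = |u(4v²−w²)|, b = |v(4u²−w²)|, c = 4uvw satisfy a²+b² = (w³)², a²+c² = (u(4v²+w²))², and b²+c² = (v(4u²+w²))²; in particular (a,b,c) is an Euler brick (provided a,b,c are nonzero). -/
import Mathlib

theorem sounderson_parametrization
    (u v w : ℤ) (hu : 0 < u) (hv : 0 < v) (hw : 0 < w)
    (h : u ^ 2 + v ^ 2 = w ^ 2) :
    (|u * (4 * v ^ 2 - w ^ 2)|) ^ 2 + (|v * (4 * u ^ 2 - w ^ 2)|) ^ 2 = (w ^ 3) ^ 2 ∧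
    (|u * (4 * v ^ 2 - w ^ 2)|) ^ 2 + (4 * u * v * w) ^ 2 = (u * (4 * v ^ 2 + w ^ 2)) ^ 2 ∧
    (|v * (4 * u ^ 2 - w ^ 2)|) ^ 2 + (4 * u * v * w) ^ 2 = (v * (4 * u ^ 2 + w ^ 2)) ^ 2 := by
  rw [sq_abs, sq_abs]
  refine ⟨by linear_combination (16 * u ^ 2 * v ^ 2 + w ^ 4) * h, by ring, by ring⟩
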